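/- The sequence EL_{n,2,1}^B for the 1-reach Bernoulli matching model with k = 2, defined by the generating-function-derived closed recurrence, satisfies EL_{n,2,1}^B = (8/11)n − (32/121) + ρ_n, where |ρ_n| ≤ C·n·2^{−2n} for some constant C; in particular lim EL_{n,2,1}^B/n = 8/11. -/

import Mathlib

open Filter Finset

/-- The matrix `M` of the 1-reach Bernoulli matching model for `k = 2`. -/
noncomputable def MB : Matrix (Fin 4) (Fin 4) ℝ :=
  !![1/8, 0, 0, 0; 1/4, 0, 0, 0; 1/4, 0, 0, 0; 1/2, 0, 0, 0]

/-- The matrix `N` of the 1-reach Bernoulli matching model for `k = 2`. -/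
noncomputable def NB : Matrix (Fin 4) (Fin 4) ℝ :=
  !![1/4, 1/4, 1/4, 1/8; 0, 1/2, 0, 1/4; 0, 0, 1/2, 1/4; 0, 0, 0, 1/2]

/-- `HB n = H_{n+1}(1)`, the section probability vector:
`H₁(1) = (1/2, 0, 0, 1/2)` and `H_{n+1}(1) = H_n(1) (M + N)`. -/
noncomputable def HB : ℕ → Fin 4 → ℝ
  | 0 => ![1/2, 0, 0, 1/2]
  | n + 1 => Matrix.vecMul (HB n) (MB + NB)

/-- `EB n = d/db H_{n+1}(b) |_{b=1}`, the expected-value vector: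
`H₁'(1) = (0, 0, 0, 1/2)` (from `H₁(b) = (1/2, 0, 0, b/2)`), with the
product rule `H_{n+1}'(1) = H_n'(1)(M + N) + H_n(1) N`
(since `T(b) = M + bN`). -/
noncomputable def EB : ℕ → Fin 4 → ℝ
  | 0 => ![0, 0, 0, 1/2]
  | n + 1 => Matrix.vecMul (EB n) (MB + NB) + Matrix.vecMul (HB n) NB

/-- `EL_{n,2,1}^B = Σ_i (EB (n-1))_i`. -/
noncomputable def ELB (n : ℕ) : ℝ := ∑ i : Fin 4, EB (n - 1) i

/-- auxiliary rotation sequence: `pq n` represents `λ^n` with `λ = (3+i√7)/16`,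
in the basis `(1, √7 i)`. -/
noncomputable def pq : ℕ → ℝ × ℝ
  | 0 => (1, 0)
  | n + 1 => ((3 * (pq n).1 - 7 * (pq n).2) / 16, ((pq n).1 + 3 * (pq n).2) / 16)

lemma HE (n : ℕ) :
    (HB n 0 = 4/11 + 3/22 * (pq n).1 + 17/22 * (pq n).2 ∧
     HB n 1 = 2/11 - 2/11 * (pq n).1 - 4/11 * (pq n).2 ∧
     HB n 2 = 2/11 - 2/11 * (pq n).1 - 4/11 * (pq n).2 ∧
     HB n 3 = 3/11 + 5/22 * (pq n).1 - 1/22 * (pq n).2) ∧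
    (EB n 0 = 8/1331 + 32/121 * n - 8/1331 * (pq n).1 + 4640/9317 * (pq n).2
        + 59/847 * n * (pq n).1 + 119/121 * n * (pq n).2 ∧
     EB n 1 = 136/1331 + 16/121 * n - 136/1331 * (pq n).1 - 3642/9317 * (pq n).2
        - 141/847 * n * (pq n).1 - 67/121 * n * (pq n).2 ∧
     EB n 2 = 136/1331 + 16/121 * n - 136/1331 * (pq n).1 - 3642/9317 * (pq n).2
        - 141/847 * n * (pq n).1 - 67/121 * n * (pq n).2 ∧
     EB n 3 = 336/1331 + 24/121 * n + 659/2662 * (pq n).1 + 2439/18634 * (pq n).2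
        + 223/847 * n * (pq n).1 + 15/121 * n * (pq n).2) := by
  induction n with
  | zero => norm_num [HB, EB, pq, Matrix.cons_val_two, Matrix.cons_val_three, Matrix.tail_cons, Matrix.head_cons]
  | succ n ih =>
    obtain ⟨⟨h0, h1, h2, h3⟩, e0, e1, e2, e3⟩ := ih
    simp only [HB, EB, pq, Matrix.vecMul, dotProduct, Fin.sum_univ_four,
      Matrix.add_apply, MB, NB, Matrix.cons_val', Matrix.cons_val_zero, Matrix.cons_val_one,
      Matrix.head_cons, Matrix.empty_val', Matrix.cons_val_fin_one, Matrix.head_fin_const,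
      Matrix.cons_val_two, Matrix.cons_val_three, Matrix.tail_cons, Pi.add_apply,
      Matrix.of_apply, Nat.cast_succ]
    rw [h0, h1, h2, h3, e0, e1, e2, e3]
    refine ⟨⟨by ring, by ring, by ring, by ring⟩, by ring, by ring, by ring, by ring⟩


lemma pq_norm (n : ℕ) : ((pq n).1) ^ 2 + 7 * ((pq n).2) ^ 2 = ((1:ℝ)/16) ^ n := by
  induction n with
  | zero => norm_num [pq]
  | succ n ih =>
    simp only [pq, pow_succ]
    nlinarith [ih]

lemma pq_bound (n : ℕ) : |(pq n).1| ≤ ((1:ℝ)/4) ^ n ∧ |(pq n).2| ≤ ((1:ℝ)/4) ^ n := by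
  have h := pq_norm n
  have h16 : ((1:ℝ)/16) ^ n = (((1:ℝ)/4) ^ n) ^ 2 := by
    rw [← pow_mul, mul_comm, pow_mul]
    norm_num
  have hpos : (0:ℝ) ≤ ((1:ℝ)/4) ^ n := by positivity
  constructor
  · exact abs_le_of_sq_le_sq (by nlinarith) hpos
  · exact abs_le_of_sq_le_sq (by nlinarith) hpos

lemma ELB_eq (n : ℕ) :
    ELB (n + 1) = (8/11) * (n + 1) - 32/121 + (9 * (pq n).1 - 37 * (pq n).2) / 242 := by
  obtain ⟨_, e0, e1, e2, e3⟩ := HE n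
  simp only [ELB, Nat.add_sub_cancel, Fin.sum_univ_four]
  rw [e0, e1, e2, e3]; ring

/-- `EL_{n,2,1}^B = (8/11) n - 32/121 + ρ_n` with `|ρ_n| ≤ C n 2^{-2n}`;
in particular `EL_{n,2,1}^B / n → 8/11`. -/
theorem EL_n21B_asymptotics :
    (∃ C : ℝ, ∀ n : ℕ, 1 ≤ n →
      |ELB n - ((8 / 11) * n - 32 / 121)| ≤ C * n * ((2 : ℝ) ^ (2 * n))⁻¹) ∧
    Tendsto (fun n : ℕ => ELB n / n) atTop (nhds (8 / 11)) := by
  have key : ∀ n : ℕ, 1 ≤ n →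
      |ELB n - ((8 / 11) * n - 32 / 121)| ≤ 1 * n * ((2 : ℝ) ^ (2 * n))⁻¹ := by
    intro n hn
    obtain ⟨m, rfl⟩ : ∃ m, n = m + 1 := ⟨n - 1, (Nat.succ_pred_eq_of_pos hn).symm⟩
    rw [ELB_eq m]
    have ⟨hp, hq⟩ := pq_bound m
    have h2 : ((2:ℝ) ^ (2 * (m+1)))⁻¹ = (1/4) * ((1:ℝ)/4) ^ m := by
      rw [pow_mul]
      norm_num
      rw [← inv_pow, pow_succ]
      norm_num
      ring
    have habs : |(9 * (pq m).1 - 37 * (pq m).2) / 242| ≤ (46/242) * ((1:ℝ)/4) ^ m := by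
      rw [abs_div, abs_of_pos (by norm_num : (0:ℝ) < 242), div_le_iff₀ (by norm_num)]
      calc |9 * (pq m).1 - 37 * (pq m).2| ≤ |9 * (pq m).1| + |37 * (pq m).2| := abs_sub _ _
        _ = 9 * |(pq m).1| + 37 * |(pq m).2| := by rw [abs_mul, abs_mul]; norm_num
        _ ≤ 9 * ((1:ℝ)/4) ^ m + 37 * ((1:ℝ)/4) ^ m := by gcongr
        _ = 46/242 * ((1:ℝ)/4) ^ m * 242 := by ring
    have hpos : (0:ℝ) ≤ ((1:ℝ)/4) ^ m := by positivity
    have hm1 : (1:ℝ) ≤ (m : ℝ) + 1 := by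
      have : (0:ℝ) ≤ (m:ℝ) := Nat.cast_nonneg m
      linarith
    calc |(8/11) * ((m:ℕ)+1:ℝ) - 32/121 + (9 * (pq m).1 - 37 * (pq m).2) / 242
            - ((8 / 11) * ((m+1 : ℕ) : ℝ) - 32 / 121)|
        = |(9 * (pq m).1 - 37 * (pq m).2) / 242| := by
          push_cast; ring_nf
      _ ≤ (46/242) * ((1:ℝ)/4) ^ m := habs
      _ ≤ 1 * ((m:ℝ)+1) * ((1/4) * ((1:ℝ)/4) ^ m) := by nlinarith
      _ = 1 * ((m+1 : ℕ) : ℝ) * ((2 : ℝ) ^ (2 * (m+1)))⁻¹ := by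
          rw [h2]; push_cast; ring
  refine ⟨⟨1, key⟩, ?_⟩
  have hto : Tendsto (fun n : ℕ => ELB n / n - 8/11) atTop (nhds 0) := by
    refine squeeze_zero_norm' (a := fun n : ℕ => (32/121 + 1) / n) ?_ ?_
    · filter_upwards [eventually_ge_atTop 1] with n hn
      have hkey := key n hn
      have hnpos : (0:ℝ) < n := by exact_mod_cast hn
      have hinv : ((2:ℝ) ^ (2*n))⁻¹ * n ≤ 1 := by
        rw [inv_mul_le_iff₀ (by positivity), mul_one]
        calc (n:ℝ) ≤ 2 ^ n := by exact_mod_cast n.lt_two_pow_self.le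
          _ ≤ 2 ^ (2*n) := by
              apply pow_le_pow_right₀ (by norm_num)
              omega
      have hb : |ELB n - (8/11) * n| ≤ 32/121 + 1 := by
        have h1 : |ELB n - ((8/11) * n - 32/121)| ≤ 1 := by
          calc |ELB n - ((8/11) * n - 32/121)|
              ≤ 1 * n * ((2 : ℝ) ^ (2 * n))⁻¹ := hkey
            _ ≤ 1 := by rw [one_mul, mul_comm]; exact hinv
        calc |ELB n - (8/11)*n| = |(ELB n - ((8/11)*n - 32/121)) + (-32/121)| := by ring_nf
          _ ≤ |ELB n - ((8/11)*n - 32/121)| + |(-32/121 : ℝ)| := abs_add_le _ _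
          _ ≤ 1 + 32/121 := by
              have h2 : |(-32/121 : ℝ)| = 32/121 := by norm_num [abs_of_nonpos]
              linarith
          _ = 32/121 + 1 := by ring
      rw [Real.norm_eq_abs]
      have heq : ELB n / n - 8/11 = (ELB n - (8/11) * n) / n := by
        field_simp
      rw [heq, abs_div, abs_of_pos hnpos]
      gcongr
    · exact tendsto_const_div_atTop_nhds_zero_nat _
  have hfinal := hto.add (tendsto_const_nhds (x := (8/11 : ℝ)))
  simp only [zero_add] at hfinal
  convert hfinal using 2 with n
  ring
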